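/- For every code tree ω and every translation parameter a ∈ ℝ^{D𝒜}, the Hausdorff dimension of the code tree fractal satisfies dim_H(A_a^ω) ≤ d^ω. -/

import Mathlib

open MeasureTheory Filter Set Topology
open scoped ENNReal Topology

noncomputable section

namespace CodeTreeFractal

variable {Λ : Type*} {E : Type*} [NormedAddCommGroup E] [NormedSpace ℝ E]

/-- The word formed by the first `k` letters of an infinite path `i`. -/
def word (i : ℕ → ℕ) (k : ℕ) : List ℕ := (List.range k).map i

/-- `w` belongs to the tree `Σ_*^ω` determined by the branching numbers `Mlam`
and the code tree `ω` : at each stage the next letter is below the branching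
number of the label of the current node. (Letters are indexed from `0`.) -/
def IsNode (Mlam : Λ → ℕ) (ω : List ℕ → Λ) (w : List ℕ) : Prop :=
  ∀ j : Fin w.length, w.get j < Mlam (ω (w.take j))

/-- `i` is an infinite path of `Σ^ω`. -/
def IsPath (Mlam : Λ → ℕ) (ω : List ℕ → Λ) (i : ℕ → ℕ) : Prop :=
  ∀ k, i k < Mlam (ω (word i k))

/-- The cylinder of infinite sequences beginning with the word `w`. -/
def cylinder (w : List ℕ) : Set (ℕ → ℕ) := {i | word i w.length = w}

/-- The set `Σ^ω` of infinite paths. -/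
def pathSet (Mlam : Λ → ℕ) (ω : List ℕ → Λ) : Set (ℕ → ℕ) := {i | IsPath Mlam ω i}

/-- The composition `T_{i_1}^{ω(∅)} ∘ ⋯ ∘ T_{i_k}^{ω(i_1⋯i_{k-1})}` of the linear
parts along a word. -/
def prodT (T : Λ → ℕ → E →L[ℝ] E) : (List ℕ → Λ) → List ℕ → E →L[ℝ] E
  | _, [] => ContinuousLinearMap.id ℝ E
  | ω, l :: w => (T (ω []) l).comp (prodT T (fun u => ω (l :: u)) w)

/-- The natural projection `Z_a^ω` sending a path to the corresponding point of the
code tree fractal. -/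
def Z (T : Λ → ℕ → E →L[ℝ] E) (tr : Λ → ℕ → E) (ω : List ℕ → Λ) (i : ℕ → ℕ) : E :=
  ∑' k : ℕ, prodT T ω (word i k) (tr (ω (word i k)) (i k))

/-- The code tree fractal `A_a^ω`. -/
def attractor (Mlam : Λ → ℕ) (T : Λ → ℕ → E →L[ℝ] E) (tr : Λ → ℕ → E)
    (ω : List ℕ → Λ) : Set E :=
  {x | ∃ i : ℕ → ℕ, IsPath Mlam ω i ∧ Z T tr ω i = x}

/-- The translation parts obtained from identified translation data
`a ∈ ℝ^{D·𝒜}` through the classes `cls (λ, i)` of the equivalence relation `∼`. -/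
def trOf {A : Type*} {D : ℕ} (cls : Λ → ℕ → A) (a : EuclideanSpace ℝ (A × Fin D))
    (l : Λ) (i : ℕ) : EuclideanSpace ℝ (Fin D) :=
  WithLp.toLp 2 (fun d => a (cls l i, d))

/-- The `j`-th largest singular value (`j ≥ 1`) of a linear map, via the
Courant–Fischer minimax characterization. -/
def singVal (T : E →L[ℝ] E) (j : ℕ) : ℝ :=
  sSup {r : ℝ | ∃ V : Submodule ℝ E, Module.finrank ℝ V = j ∧
    r = sInf {s : ℝ | ∃ v ∈ V, ‖v‖ = 1 ∧ s = ‖T v‖}}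

/-- The singular value function `Φ^α(T) = σ₁ ⋯ σ_{m-1} σ_m^{α-m+1}` where
`m = min (⌊α⌋ + 1) D`. -/
def Phi (D : ℕ) (T : E →L[ℝ] E) (α : ℝ) : ℝ :=
  (∏ i ∈ Finset.range (min (⌊α⌋₊ + 1) D - 1), singVal T (i + 1)) *
    singVal T (min (⌊α⌋₊ + 1) D) ^ (α - ((min (⌊α⌋₊ + 1) D - 1 : ℕ) : ℝ))

/-- The sum `S^ω(k, α)` of the singular value function over the level-`k` nodes. -/
def S (D : ℕ) (Mlam : Λ → ℕ) (T : Λ → ℕ → E →L[ℝ] E) (ω : List ℕ → Λ)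
    (k : ℕ) (α : ℝ) : ℝ :=
  ∑' w : {w : List ℕ // w.length = k ∧ IsNode Mlam ω w}, Phi D (prodT T ω w.1) α

/-- The lower pressure `p_inf^ω(α)`. -/
def pinf (D : ℕ) (Mlam : Λ → ℕ) (T : Λ → ℕ → E →L[ℝ] E) (ω : List ℕ → Λ)
    (α : ℝ) : ℝ :=
  liminf (fun k : ℕ => Real.log (S D Mlam T ω k α) / k) atTop

/-- The upper pressure `p_sup^ω(α)`. -/
def psup (D : ℕ) (Mlam : Λ → ℕ) (T : Λ → ℕ → E →L[ℝ] E) (ω : List ℕ → Λ)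
    (α : ℝ) : ℝ :=
  limsup (fun k : ℕ => Real.log (S D Mlam T ω k α) / k) atTop

/-- The stage-`j` covering sums defining the natural measure `M_j^α(Σ^ω)`. -/
def natStage (D : ℕ) (Mlam : Λ → ℕ) (T : Λ → ℕ → E →L[ℝ] E) (ω : List ℕ → Λ)
    (α : ℝ) (j : ℕ) : ℝ≥0∞ :=
  ⨅ (J : Set (List ℕ)) (_ : ∀ w ∈ J, IsNode Mlam ω w ∧ j ≤ w.length)
    (_ : pathSet Mlam ω ⊆ ⋃ w ∈ J, cylinder w),
    ∑' w : J, ENNReal.ofReal (Phi D (prodT T ω w.1) α)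

/-- The natural measure `M^α(Σ^ω) = lim_j M_j^α(Σ^ω)`. -/
def natMeasure (D : ℕ) (Mlam : Λ → ℕ) (T : Λ → ℕ → E →L[ℝ] E) (ω : List ℕ → Λ)
    (α : ℝ) : ℝ≥0∞ :=
  ⨆ j : ℕ, natStage D Mlam T ω α j

/-- The affinity dimension `d^ω = inf {α ≥ 0 : M^α(Σ^ω) = 0}`. -/
def affinityDim (D : ℕ) (Mlam : Λ → ℕ) (T : Λ → ℕ → E →L[ℝ] E)
    (ω : List ℕ → Λ) : ℝ :=
  sInf {α : ℝ | 0 ≤ α ∧ natMeasure D Mlam T ω α = 0}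

/-- `n` is a neck level of the code tree `ω` : all sub code trees rooted at
level `n` are identical. -/
def IsNeck (Mlam : Λ → ℕ) (ω : List ℕ → Λ) (n : ℕ) : Prop :=
  ∀ w w' : List ℕ, w.length = n → w'.length = n →
    IsNode Mlam ω w → IsNode Mlam ω w' → ∀ u : List ℕ,
      IsNode Mlam ω (w ++ u) → IsNode Mlam ω (w' ++ u) ∧ ω (w ++ u) = ω (w' ++ u)

/-- The subset of `Ω × ℕ^ℕ` of pairs `(ω, N)` forming the space `Ω̃` : with the
convention `N 0 = 0`, the sequence `N 1 < N 2 < ⋯` is a strictly increasing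
sequence of neck levels of `ω`. -/
def neckSpace (Mlam : Λ → ℕ) : Set ((List ℕ → Λ) × (ℕ → ℕ)) :=
  {p | p.2 0 = 0 ∧ StrictMono p.2 ∧ ∀ m, 1 ≤ m → IsNeck Mlam p.1 (p.2 m)}

/-- The shift `Ξ(ω, N) = (ω̂, N̂)`, `N̂ m = N (m+1) - N 1`, where the sub code tree
`ω̂` is rooted at the (leftmost) node of length `N 1`; on `neckSpace` the choice of
this node is irrelevant. -/
def Xi : ((List ℕ → Λ) × (ℕ → ℕ)) → ((List ℕ → Λ) × (ℕ → ℕ)) :=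
  fun p => (fun u => p.1 (List.replicate (p.2 1) 0 ++ u), fun m => p.2 (m + 1) - p.2 1)
/-! ### Combinatorial lemmas on words and trees -/

section Words

variable {Λ : Type*} {E : Type*} [NormedAddCommGroup E] [NormedSpace ℝ E]
variable {Mlam : Λ → ℕ} {ω : List ℕ → Λ}

@[simp] lemma word_length (i : ℕ → ℕ) (k : ℕ) : (word i k).length = k := by
  simp [word]

lemma word_succ (i : ℕ → ℕ) (k : ℕ) : word i (k + 1) = word i k ++ [i k] := by
  simp [word, List.range_succ]

lemma word_take (i : ℕ → ℕ) {k n : ℕ} (h : k ≤ n) :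
    (word i n).take k = word i k := by
  simp [word, ← List.map_take, List.take_range, Nat.min_eq_left h]

lemma word_getElem (i : ℕ → ℕ) {k n : ℕ} (h : k < n) :
    (word i n)[k]'(by simpa using h) = i k := by
  simp [word]

lemma word_append (i : ℕ → ℕ) (n k : ℕ) :
    word i (n + k) = word i n ++ word (fun t => i (n + t)) k := by
  induction k with
  | zero => simp [word]
  | succ k ih => rw [← Nat.add_assoc, word_succ, ih, word_succ, List.append_assoc]

lemma isNode_word {i : ℕ → ℕ} (h : IsPath Mlam ω i) (k : ℕ) :
    IsNode Mlam ω (word i k) := by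
  intro j
  have hj : (j : ℕ) < k := by simpa using j.isLt
  have h1 : (word i k).get j = i j := by
    simpa [List.get_eq_getElem] using word_getElem i hj
  have h2 : (word i k).take j = word i (j : ℕ) := word_take i hj.le
  rw [h1, h2]
  exact h j

lemma IsNode.head {l : ℕ} {w : List ℕ} (h : IsNode Mlam ω (l :: w)) :
    l < Mlam (ω []) := by
  have := h ⟨0, by simp⟩
  simpa using this

lemma IsNode.tail {l : ℕ} {w : List ℕ} (h : IsNode Mlam ω (l :: w)) :
    IsNode Mlam (fun u => ω (l :: u)) w := by
  intro j
  have := h ⟨(j : ℕ) + 1, by simp⟩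
  simpa [List.get_eq_getElem] using this

lemma isPath_shift {i : ℕ → ℕ} {w : List ℕ} (hi : IsPath Mlam ω i)
    (hw : word i w.length = w) :
    IsPath Mlam (fun u => ω (w ++ u)) (fun k => i (w.length + k)) := by
  intro k
  have h2 : w ++ word (fun t => i (w.length + t)) k = word i (w.length + k) := by
    rw [word_append, hw]
  simpa [h2] using hi (w.length + k)

lemma prodT_append (T : Λ → ℕ → E →L[ℝ] E) :
    ∀ (w u : List ℕ) (ω : List ℕ → Λ),
      prodT T ω (w ++ u) = (prodT T ω w).comp (prodT T (fun v => ω (w ++ v)) u)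
  | [], u, ω => by
    ext x; simp [prodT]
  | l :: w, u, ω => by
    show (T (ω []) l).comp (prodT T (fun v => ω (l :: v)) (w ++ u)) = _
    rw [prodT_append T w u (fun v => ω (l :: v))]
    rfl

lemma norm_prodT_le {σ : ℝ} (hσ0 : 0 ≤ σ) {T : Λ → ℕ → E →L[ℝ] E}
    (hT : ∀ l q, q < Mlam l → ‖T l q‖ ≤ σ) :
    ∀ (w : List ℕ) (ω : List ℕ → Λ), IsNode Mlam ω w →
      ‖prodT T ω w‖ ≤ σ ^ w.length
  | [], ω, _ => by
    simpa [prodT] using ContinuousLinearMap.norm_id_le (E := E)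
  | l :: w, ω, h => by
    calc ‖prodT T ω (l :: w)‖ ≤ ‖T (ω []) l‖ * ‖prodT T (fun u => ω (l :: u)) w‖ :=
          ContinuousLinearMap.opNorm_comp_le _ _
    _ ≤ σ * σ ^ w.length := by
        apply mul_le_mul (hT _ _ h.head) (norm_prodT_le hσ0 hT w _ h.tail)
          (norm_nonneg _) hσ0
    _ = σ ^ (l :: w).length := by rw [List.length_cons, pow_succ']

lemma prodT_injective {T : Λ → ℕ → E →L[ℝ] E}
    (hT : ∀ l q, q < Mlam l → Function.Injective (T l q)) :
    ∀ (w : List ℕ) (ω : List ℕ → Λ), IsNode Mlam ω w →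
      Function.Injective (prodT T ω w)
  | [], ω, _ => fun x y hxy => by simpa [prodT] using hxy
  | l :: w, ω, h => by
    have h1 : Function.Injective (T (ω []) l) := hT _ _ h.head
    have h2 := prodT_injective hT w (fun u => ω (l :: u)) h.tail
    exact fun x y hxy => h2 (h1 (by simpa [prodT] using hxy))

end Words

lemma word_getD (i : ℕ → ℕ) {k n : ℕ} (h : k < n) : (word i n).getD k 0 = i k := by
  rw [List.getD_eq_getElem (word i n) 0 (by simpa using h)]
  exact word_getElem i h
/-! ### Bounds on the projection `Z` -/

section ZLemmas

variable {Λ : Type*} {E : Type*} [NormedAddCommGroup E] [NormedSpace ℝ E] [CompleteSpace E]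
variable {Mlam : Λ → ℕ} {ω : List ℕ → Λ} {T : Λ → ℕ → E →L[ℝ] E}
variable {σ Ctr : ℝ} {tr : Λ → ℕ → E}

lemma norm_Zterm_le (hσ0 : 0 ≤ σ) (hT : ∀ l q, q < Mlam l → ‖T l q‖ ≤ σ)
    (hCtr : ∀ l q, ‖tr l q‖ ≤ Ctr) {i : ℕ → ℕ} (hi : IsPath Mlam ω i) (k : ℕ) :
    ‖prodT T ω (word i k) (tr (ω (word i k)) (i k))‖ ≤ σ ^ k * Ctr := by
  calc ‖prodT T ω (word i k) (tr (ω (word i k)) (i k))‖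
      ≤ ‖prodT T ω (word i k)‖ * ‖tr (ω (word i k)) (i k)‖ :=
        ContinuousLinearMap.le_opNorm _ _
    _ ≤ σ ^ k * Ctr := by
        apply mul_le_mul _ (hCtr _ _) (norm_nonneg _) (pow_nonneg hσ0 _)
        simpa using norm_prodT_le hσ0 hT (word i k) ω (isNode_word hi k)

lemma summable_Zterm (hσ0 : 0 ≤ σ) (hσ1 : σ < 1)
    (hT : ∀ l q, q < Mlam l → ‖T l q‖ ≤ σ) (hCtr : ∀ l q, ‖tr l q‖ ≤ Ctr)
    {i : ℕ → ℕ} (hi : IsPath Mlam ω i) :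
    Summable (fun k => prodT T ω (word i k) (tr (ω (word i k)) (i k))) := by
  apply Summable.of_norm_bounded ((summable_geometric_of_lt_one hσ0 hσ1).mul_right Ctr)
  exact norm_Zterm_le hσ0 hT hCtr hi

lemma norm_Z_le (hσ0 : 0 ≤ σ) (hσ1 : σ < 1)
    (hT : ∀ l q, q < Mlam l → ‖T l q‖ ≤ σ) (hCtr : ∀ l q, ‖tr l q‖ ≤ Ctr)
    {i : ℕ → ℕ} (hi : IsPath Mlam ω i) :
    ‖Z T tr ω i‖ ≤ (1 - σ)⁻¹ * Ctr := by
  have h1 : Summable (fun k : ℕ => σ ^ k * Ctr) :=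
    (summable_geometric_of_lt_one hσ0 hσ1).mul_right Ctr
  calc ‖Z T tr ω i‖ ≤ ∑' k : ℕ, σ ^ k * Ctr := by
        apply tsum_of_norm_bounded h1.hasSum (norm_Zterm_le hσ0 hT hCtr hi)
    _ = (1 - σ)⁻¹ * Ctr := by
        rw [tsum_mul_right, tsum_geometric_of_lt_one hσ0 hσ1]

/-- The common "translation" part of `Z i` over the cylinder of `w`. -/
def cVec (T : Λ → ℕ → E →L[ℝ] E) (tr : Λ → ℕ → E) (ω : List ℕ → Λ) (w : List ℕ) : E :=
  ∑ k ∈ Finset.range w.length, prodT T ω (w.take k) (tr (ω (w.take k)) (w.getD k 0))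

lemma Z_eq_on_cylinder (hσ0 : 0 ≤ σ) (hσ1 : σ < 1)
    (hT : ∀ l q, q < Mlam l → ‖T l q‖ ≤ σ) (hCtr : ∀ l q, ‖tr l q‖ ≤ Ctr)
    {i : ℕ → ℕ} (hi : IsPath Mlam ω i) {w : List ℕ} (hw : word i w.length = w) :
    Z T tr ω i = cVec T tr ω w +
      prodT T ω w (Z T tr (fun u => ω (w ++ u)) (fun k => i (w.length + k))) := by
  set n := w.length with hn
  set i' : ℕ → ℕ := fun k => i (n + k) with hi'
  set ω' : List ℕ → Λ := fun u => ω (w ++ u) with hω'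
  have hpath' : IsPath Mlam ω' i' := isPath_shift hi hw
  have hsum := summable_Zterm hσ0 hσ1 hT hCtr hi
  have hsum' := summable_Zterm hσ0 hσ1 hT hCtr hpath'
  have hsplit := (Summable.sum_add_tsum_nat_add n hsum).symm
  rw [Z, hsplit]
  congr 1
  · -- finite part equals cVec
    apply Finset.sum_congr rfl
    intro k hk
    have hk' : k < n := Finset.mem_range.mp hk
    have h1 : word i k = w.take k := by rw [← hw, word_take i hk'.le]
    have h2 : w.getD k 0 = i k := by
      rw [← hw]; exact word_getD i hk'
    rw [h1, ← h2]
  · -- tail part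
    have hterm : ∀ k : ℕ,
        prodT T ω (word i (k + n)) (tr (ω (word i (k + n))) (i (k + n)))
          = prodT T ω w (prodT T ω' (word i' k) (tr (ω' (word i' k)) (i' k))) := by
      intro k
      have hword : word i (k + n) = w ++ word i' k := by
        rw [Nat.add_comm k n, word_append, hw]
      have hik : i (k + n) = i' k := by rw [hi']; ring_nf
      rw [hword, hik, prodT_append T w (word i' k) ω]
      rfl
    calc ∑' k : ℕ, prodT T ω (word i (k + n)) (tr (ω (word i (k + n))) (i (k + n)))
        = ∑' k : ℕ, prodT T ω w (prodT T ω' (word i' k) (tr (ω' (word i' k)) (i' k))) := by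
          exact tsum_congr hterm
      _ = prodT T ω w (Z T tr ω' i') := by
          rw [Z, ← ContinuousLinearMap.map_tsum _ hsum']

end ZLemmas
/-! ### Singular values via the spectral theorem -/

section SingVal

variable {D : ℕ}

lemma sInf_normSet_le (T : EuclideanSpace ℝ (Fin D) →L[ℝ] EuclideanSpace ℝ (Fin D))
    (V : Submodule ℝ (EuclideanSpace ℝ (Fin D))) :
    sInf {s : ℝ | ∃ v ∈ V, ‖v‖ = 1 ∧ s = ‖T v‖} ≤ ‖T‖ := by
  by_cases hne : {s : ℝ | ∃ v ∈ V, ‖v‖ = 1 ∧ s = ‖T v‖}.Nonempty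
  · obtain ⟨s0, v, hvV, hv1, rfl⟩ := hne
    refine le_trans (csInf_le ⟨0, ?_⟩ ⟨v, hvV, hv1, rfl⟩) ?_
    · rintro x ⟨u, -, -, rfl⟩; exact norm_nonneg _
    · calc ‖T v‖ ≤ ‖T‖ * ‖v‖ := T.le_opNorm v
        _ = ‖T‖ := by rw [hv1, mul_one]
  · rw [Set.not_nonempty_iff_eq_empty] at hne
    rw [hne, Real.sInf_empty]
    exact norm_nonneg T

lemma singVal_nonneg (T : EuclideanSpace ℝ (Fin D) →L[ℝ] EuclideanSpace ℝ (Fin D)) (j : ℕ) :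
    0 ≤ singVal T j := by
  apply Real.sSup_nonneg
  rintro r ⟨V, hV, rfl⟩
  apply Real.sInf_nonneg
  rintro x ⟨v, hv, hv1, rfl⟩
  exact norm_nonneg _

lemma singVal_le_norm (T : EuclideanSpace ℝ (Fin D) →L[ℝ] EuclideanSpace ℝ (Fin D)) (j : ℕ) :
    singVal T j ≤ ‖T‖ := by
  apply Real.sSup_le _ (norm_nonneg T)
  rintro r ⟨V, hV, rfl⟩
  exact sInf_normSet_le T V

lemma exists_svd (T : EuclideanSpace ℝ (Fin D) →L[ℝ] EuclideanSpace ℝ (Fin D))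
    (hinj : Function.Injective T) :
    ∃ (s : Fin D → ℝ) (e f : Fin D → EuclideanSpace ℝ (Fin D)),
      Antitone s ∧ (∀ k, 0 < s k) ∧
      (∀ v, T v = ∑ k, (s k * (inner ℝ (e k) v : ℝ)) • f k) ∧
      Orthonormal ℝ e ∧ Orthonormal ℝ f ∧
      (∀ k : Fin D, s k ≤ singVal T ((k : ℕ) + 1)) := by
  classical
  have hrank : Module.finrank ℝ (EuclideanSpace ℝ (Fin D)) = D := finrank_euclideanSpace_fin
  set S : EuclideanSpace ℝ (Fin D) →L[ℝ] EuclideanSpace ℝ (Fin D) :=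
    (ContinuousLinearMap.adjoint T).comp T with hSdef
  have hTST : ∀ x y, (inner ℝ (S x) y : ℝ) = (inner ℝ (T x) (T y) : ℝ) := by
    intro x y
    simp only [hSdef, ContinuousLinearMap.comp_apply]
    rw [ContinuousLinearMap.adjoint_inner_left]
  have hsymm : (S : EuclideanSpace ℝ (Fin D) →ₗ[ℝ] EuclideanSpace ℝ (Fin D)).IsSymmetric := by
    intro x y
    simp only [ContinuousLinearMap.coe_coe]
    rw [hTST]
    simp only [hSdef, ContinuousLinearMap.comp_apply]
    rw [ContinuousLinearMap.adjoint_inner_right]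
  set e0 := hsymm.eigenvectorBasis hrank with he0def
  set μ0 := hsymm.eigenvalues hrank with hμ0def
  have happly : ∀ i, S (e0 i) = μ0 i • e0 i := fun i =>
    hsymm.apply_eigenvectorBasis hrank i
  have hμ0 : ∀ i, μ0 i = ‖T (e0 i)‖ ^ 2 := by
    intro i
    have h1 : (inner ℝ (S (e0 i)) (e0 i) : ℝ) = μ0 i := by
      rw [happly i, real_inner_smul_left, real_inner_self_eq_norm_sq,
        e0.orthonormal.1 i]
      norm_num
    rw [← h1, hTST, real_inner_self_eq_norm_sq]
  have hμ0pos : ∀ i, 0 < μ0 i := by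
    intro i
    rw [hμ0 i]
    have h0 : e0 i ≠ 0 := by
      intro h
      have := e0.orthonormal.1 i
      rw [h, norm_zero] at this
      exact one_ne_zero this.symm
    have : T (e0 i) ≠ 0 := by
      intro h
      exact h0 (hinj (by rw [h, map_zero]))
    exact pow_pos (norm_pos_iff.mpr this) 2
  set t : Fin D → ℝ := fun i => Real.sqrt (μ0 i) with ht
  set π : Equiv.Perm (Fin D) := (Fin.revPerm).trans (Tuple.sort t) with hπ
  set s : Fin D → ℝ := fun k => t (π k) with hs
  have hs_anti : Antitone s := by
    intro k k' hkk'
    exact Tuple.monotone_sort t (show (Fin.rev k') ≤ Fin.rev k from Fin.rev_le_rev.mpr hkk')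
  have hspos : ∀ k, 0 < s k := fun k => Real.sqrt_pos.mpr (hμ0pos (π k))
  have hssq : ∀ k, s k ^ 2 = μ0 (π k) := fun k => Real.sq_sqrt (hμ0pos (π k)).le
  set e : Fin D → EuclideanSpace ℝ (Fin D) := fun k => e0 (π k) with he
  have happly' : ∀ k, S (e k) = (s k ^ 2) • e k := fun k => by
    rw [he, happly (π k), hssq]
  have hortho_e : Orthonormal ℝ e := e0.orthonormal.comp π π.injective
  set f : Fin D → EuclideanSpace ℝ (Fin D) := fun k => (s k)⁻¹ • T (e k) with hf
  have hTe : ∀ k, T (e k) = s k • f k := fun k => (smul_inv_smul₀ (hspos k).ne' _).symm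
  have hinner_TeTe : ∀ k l, (inner ℝ (T (e k)) (T (e l)) : ℝ) =
      s k ^ 2 * (inner ℝ (e k) (e l) : ℝ) := by
    intro k l
    rw [← hTST, happly' k, real_inner_smul_left]
  have hortho_f : Orthonormal ℝ f := by
    rw [orthonormal_iff_ite]
    intro k l
    have h1 : (inner ℝ (f k) (f l) : ℝ) =
        (s k)⁻¹ * ((s l)⁻¹ * (inner ℝ (T (e k)) (T (e l)) : ℝ)) := by
      rw [hf]
      simp only [real_inner_smul_left, real_inner_smul_right]
      ring
    rw [h1, hinner_TeTe]
    have := orthonormal_iff_ite.mp hortho_e k l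
    rw [this]
    by_cases hkl : k = l
    · subst hkl
      have hk0 : s k ≠ 0 := (hspos k).ne'
      simp only [if_true]
      field_simp
    · simp [hkl]
  have hrep : ∀ v, T v = ∑ k, (s k * (inner ℝ (e k) v : ℝ)) • f k := by
    intro v
    have hv : ∑ k, (inner ℝ (e k) v : ℝ) • e k = v := by
      have h2 : ∑ k, (inner ℝ (e0 (π k)) v : ℝ) • e0 (π k)
          = ∑ i, (inner ℝ (e0 i) v : ℝ) • e0 i :=
        Equiv.sum_comp π (fun i => (inner ℝ (e0 i) v : ℝ) • e0 i)
      exact h2.trans (e0.sum_repr' v)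
    conv_lhs => rw [← hv]
    rw [map_sum]
    apply Finset.sum_congr rfl
    intro k _
    rw [_root_.map_smul, hTe k, smul_smul, mul_comm]
  refine ⟨s, e, f, hs_anti, hspos, hrep, hortho_e, hortho_f, ?_⟩
  intro k
  set j := (k : ℕ) + 1 with hj
  have hjD : j ≤ D := k.isLt
  set e' : Fin j → EuclideanSpace ℝ (Fin D) := fun q => e (Fin.castLE hjD q) with he'
  have horthoe' : Orthonormal ℝ e' := hortho_e.comp _ (Fin.castLE_injective hjD)
  have horthof' : Orthonormal ℝ (fun q : Fin j => f (Fin.castLE hjD q)) :=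
    hortho_f.comp _ (Fin.castLE_injective hjD)
  set V := Submodule.span ℝ (Set.range e') with hV
  have hVrank : Module.finrank ℝ V = j := by
    rw [hV, finrank_span_eq_card horthoe'.linearIndependent, Fintype.card_fin]
  have hlow : ∀ r ∈ {r : ℝ | ∃ v ∈ V, ‖v‖ = 1 ∧ r = ‖T v‖}, s k ≤ r := by
    rintro r ⟨v, hvV, hv1, rfl⟩
    obtain ⟨c, hc⟩ := (Submodule.mem_span_range_iff_exists_fun ℝ).mp hvV
    have hTv : T v = ∑ q : Fin j, (c q * s (Fin.castLE hjD q)) • f (Fin.castLE hjD q) := by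
      rw [← hc, map_sum]
      apply Finset.sum_congr rfl
      intro q _
      rw [_root_.map_smul, hTe, smul_smul]
    have hnorm2 : ‖T v‖ ^ 2 = ∑ q : Fin j, (c q * s (Fin.castLE hjD q)) ^ 2 := by
      rw [← real_inner_self_eq_norm_sq, hTv, horthof'.inner_sum]
      simp [sq]
    have hv2 : (1 : ℝ) = ∑ q, (c q) ^ 2 := by
      have : (1 : ℝ) = ‖v‖ ^ 2 := by rw [hv1]; ring
      rw [this, ← real_inner_self_eq_norm_sq, ← hc, horthoe'.inner_sum]
      simp [sq]
    have key : s k ^ 2 ≤ ‖T v‖ ^ 2 := by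
      rw [hnorm2]
      calc s k ^ 2 = ∑ q : Fin j, s k ^ 2 * (c q) ^ 2 := by
            rw [← Finset.mul_sum, ← hv2, mul_one]
        _ ≤ ∑ q : Fin j, (c q * s (Fin.castLE hjD q)) ^ 2 := by
            apply Finset.sum_le_sum
            intro q _
            have hle : s k ≤ s (Fin.castLE hjD q) := by
              apply hs_anti
              have : (Fin.castLE hjD q : ℕ) ≤ (k : ℕ) := Nat.lt_succ_iff.mp q.isLt
              exact this
            have h2 : s k ^ 2 ≤ s (Fin.castLE hjD q) ^ 2 :=
              pow_le_pow_left₀ (hspos k).le hle 2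
            calc s k ^ 2 * (c q) ^ 2 ≤ s (Fin.castLE hjD q) ^ 2 * (c q) ^ 2 :=
                  mul_le_mul_of_nonneg_right h2 (sq_nonneg _)
              _ = (c q * s (Fin.castLE hjD q)) ^ 2 := by ring
    nlinarith [norm_nonneg (T v), (hspos k).le]
  have hge : s k ≤ sInf {r : ℝ | ∃ v ∈ V, ‖v‖ = 1 ∧ r = ‖T v‖} := by
    apply le_csInf
    · refine ⟨‖T (e' ⟨0, Nat.succ_pos _⟩)‖, e' ⟨0, Nat.succ_pos _⟩, ?_, ?_, rfl⟩
      · exact Submodule.subset_span (Set.mem_range_self _)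
      · exact horthoe'.1 _
    · exact hlow
  refine le_trans hge (le_csSup ⟨‖T‖, ?_⟩ ⟨V, hVrank, rfl⟩)
  rintro r ⟨V', hV', rfl⟩
  exact sInf_normSet_le T V'

end SingVal
/-! ### Bounds on the singular value function and the covering lemma -/

section PhiCover

variable {D : ℕ} {α : ℝ}

lemma phi_exp_nonneg (hα : 0 ≤ α) (D : ℕ) :
    0 ≤ α - ((min (⌊α⌋₊ + 1) D - 1 : ℕ) : ℝ) := by
  rw [sub_nonneg]
  calc ((min (⌊α⌋₊ + 1) D - 1 : ℕ) : ℝ) ≤ (⌊α⌋₊ : ℝ) := by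
        have : min (⌊α⌋₊ + 1) D - 1 ≤ ⌊α⌋₊ := by
          have := min_le_left (⌊α⌋₊ + 1) D
          omega
        exact_mod_cast this
    _ ≤ α := Nat.floor_le hα

lemma Phi_nonneg (T : EuclideanSpace ℝ (Fin D) →L[ℝ] EuclideanSpace ℝ (Fin D)) (α : ℝ) :
    0 ≤ Phi D T α := by
  apply mul_nonneg
  · exact Finset.prod_nonneg fun i _ => singVal_nonneg T (i + 1)
  · exact Real.rpow_nonneg (singVal_nonneg T _) _

lemma Phi_le_rpow_norm (hα : 0 ≤ α)
    (T : EuclideanSpace ℝ (Fin D) →L[ℝ] EuclideanSpace ℝ (Fin D)) (hT : 0 < ‖T‖) :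
    Phi D T α ≤ ‖T‖ ^ α := by
  set m := min (⌊α⌋₊ + 1) D with hm
  have hexp := phi_exp_nonneg hα D
  have h1 : (∏ i ∈ Finset.range (m - 1), singVal T (i + 1)) ≤ ‖T‖ ^ (m - 1) := by
    calc (∏ i ∈ Finset.range (m - 1), singVal T (i + 1))
        ≤ ∏ _i ∈ Finset.range (m - 1), ‖T‖ := by
          apply Finset.prod_le_prod (fun i _ => singVal_nonneg T _)
            (fun i _ => singVal_le_norm T _)
      _ = ‖T‖ ^ (m - 1) := by rw [Finset.prod_const, Finset.card_range]
  have h2 : singVal T m ^ (α - ((m - 1 : ℕ) : ℝ)) ≤ ‖T‖ ^ (α - ((m - 1 : ℕ) : ℝ)) :=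
    Real.rpow_le_rpow (singVal_nonneg T m) (singVal_le_norm T m) hexp
  calc Phi D T α ≤ ‖T‖ ^ (m - 1) * ‖T‖ ^ (α - ((m - 1 : ℕ) : ℝ)) := by
        apply mul_le_mul h1 h2 (Real.rpow_nonneg (singVal_nonneg T m) _)
          (pow_nonneg (norm_nonneg T) _)
    _ = ‖T‖ ^ α := by
        rw [← Real.rpow_natCast ‖T‖ (m - 1), ← Real.rpow_add hT]
        congr 1
        ring

lemma exists_grid {n : ℕ} (hn : 0 < n) {b c : ℝ} (hb : 0 < b) (hc : |c| ≤ b) :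
    ∃ κ : Fin n, |c - (-b + (2 * ((κ : ℕ) : ℝ) + 1) * (b / n))| ≤ b / n := by
  have hnR : (0 : ℝ) < n := by exact_mod_cast hn
  set h := b / n with hh
  have hhpos : 0 < h := div_pos hb hnR
  have hnh : (n : ℝ) * h = b := by rw [hh]; field_simp [hnR.ne']
  set y := (c + b) / (2 * h) with hy
  have hy0 : 0 ≤ y := by
    apply div_nonneg _ (by positivity)
    nlinarith [abs_le.mp hc]
  have hyn : y ≤ n := by
    rw [hy, div_le_iff₀ (by positivity)]
    nlinarith [abs_le.mp hc]
  have hcb : c + b = y * (2 * h) := by rw [hy]; field_simp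
  set κn := min ⌊y⌋₊ (n - 1) with hκn
  have hκlt : κn < n := by omega
  refine ⟨⟨κn, hκlt⟩, ?_⟩
  have hgoal : 2 * (κn : ℝ) * h ≤ c + b ∧ c + b ≤ (2 * (κn : ℝ) + 2) * h := by
    by_cases hcase : ⌊y⌋₊ ≤ n - 1
    · have hκeq : κn = ⌊y⌋₊ := min_eq_left hcase
      have hfl : (κn : ℝ) ≤ y := by rw [hκeq]; exact Nat.floor_le hy0
      have hfl2 : y < (κn : ℝ) + 1 := by rw [hκeq]; exact Nat.lt_floor_add_one y
      constructor
      · rw [hcb]; nlinarith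
      · rw [hcb]; nlinarith
    · push_neg at hcase
      have h1 : (n : ℝ) ≤ (⌊y⌋₊ : ℝ) := by exact_mod_cast (by omega : n ≤ ⌊y⌋₊)
      have h2 : y = n := le_antisymm hyn (le_trans h1 (Nat.floor_le hy0))
      have hκeq : κn = n - 1 := min_eq_right (by omega)
      have hκR : (κn : ℝ) = (n : ℝ) - 1 := by
        rw [hκeq, Nat.cast_sub hn, Nat.cast_one]
      constructor
      · rw [hcb, h2, hκR]; nlinarith
      · rw [hcb, h2, hκR]; nlinarith
  rw [abs_le]
  constructor
  · nlinarith [hgoal.2]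
  · nlinarith [hgoal.1]

lemma cover_image_closedBall (hD : 0 < D)
    (T : EuclideanSpace ℝ (Fin D) →L[ℝ] EuclideanSpace ℝ (Fin D))
    (hinj : Function.Injective T) {α R : ℝ} (hα : 0 ≤ α) (hR : 0 < R) :
    ∃ (ι : Type) (_ : Fintype ι) (ctr : ι → EuclideanSpace ℝ (Fin D)) (ρ : ℝ),
      0 < ρ ∧ ρ ≤ Real.sqrt D * ‖T‖ * R ∧
      (T '' Metric.closedBall 0 R ⊆ ⋃ κ, Metric.closedBall (ctr κ) ρ) ∧
      (Fintype.card ι : ℝ) * (2 * ρ) ^ α ≤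
        2 ^ D * (2 * Real.sqrt D * R) ^ α * Phi D T α := by
  classical
  obtain ⟨s, e, f, hanti, hspos, hrep, he, hf, hsing⟩ := exists_svd T hinj
  set m := min (⌊α⌋₊ + 1) D with hm
  have hm1 : 1 ≤ m := le_min (Nat.succ_le_succ (Nat.zero_le _)) hD
  have hmD : m ≤ D := min_le_right _ _
  have hidx : m - 1 < D := by omega
  set idx : Fin D := ⟨m - 1, hidx⟩ with hidxdef
  set r := s idx with hrdef
  have hr : 0 < r := hspos idx
  set n : Fin D → ℕ := fun i => ⌈s i / r⌉₊ with hndef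
  have hn1 : ∀ i, 1 ≤ n i := fun i => Nat.ceil_pos.mpr (div_pos (hspos i) hr)
  have hsqrtD : 0 < Real.sqrt D := Real.sqrt_pos.mpr (by exact_mod_cast hD)
  set ρ := Real.sqrt D * r * R with hρdef
  have hρpos : 0 < ρ := by positivity
  -- the centres
  set ctr : (∀ i : Fin D, Fin (n i)) → EuclideanSpace ℝ (Fin D) :=
    fun κ => ∑ i, (-(s i * R) + (2 * ((κ i : ℕ) : ℝ) + 1) * (s i * R / n i)) • f i with hctr
  refine ⟨∀ i : Fin D, Fin (n i), inferInstance, ctr, ρ, hρpos, ?_, ?_, ?_⟩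
  · -- ρ ≤ √D ‖T‖ R
    have : r ≤ ‖T‖ := by
      calc r ≤ singVal T ((idx : ℕ) + 1) := hsing idx
        _ ≤ ‖T‖ := singVal_le_norm T _
    apply mul_le_mul_of_nonneg_right _ hR.le
    exact mul_le_mul_of_nonneg_left this hsqrtD.le
  · -- coverage
    rintro x ⟨v, hv, rfl⟩
    rw [Metric.mem_closedBall, dist_zero_right] at hv
    set c : Fin D → ℝ := fun i => s i * (inner ℝ (e i) v : ℝ) with hcdef
    have hcb : ∀ i, |c i| ≤ s i * R := by
      intro i
      rw [hcdef, abs_mul, abs_of_pos (hspos i)]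
      apply mul_le_mul_of_nonneg_left _ (hspos i).le
      calc |(inner ℝ (e i) v : ℝ)| ≤ ‖e i‖ * ‖v‖ := abs_real_inner_le_norm _ _
        _ ≤ R := by rw [he.1 i, one_mul]; exact hv
    have hbpos : ∀ i : Fin D, 0 < s i * R := fun i => mul_pos (hspos i) hR
    have hgrid := fun i => exists_grid (hn1 i) (hbpos i) (hcb i)
    choose κ hκ using hgrid
    refine Set.mem_iUnion.mpr ⟨κ, ?_⟩
    rw [Metric.mem_closedBall, dist_eq_norm]
    have hdiff : T v - ctr κ
        = ∑ i, (c i - (-(s i * R) + (2 * ((κ i : ℕ) : ℝ) + 1) * (s i * R / n i))) • f i := by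
      rw [hrep v, hctr, ← Finset.sum_sub_distrib]
      apply Finset.sum_congr rfl
      intro i _
      rw [sub_smul]
    have hbound : ∀ i, |c i - (-(s i * R) + (2 * ((κ i : ℕ) : ℝ) + 1) * (s i * R / n i))|
        ≤ r * R := by
      intro i
      refine le_trans (hκ i) ?_
      -- (s i * R) / n i ≤ r * R  since s i ≤ n i * r
      have h1 : s i ≤ (n i : ℝ) * r := by
        have := Nat.le_ceil (s i / r)
        rw [div_le_iff₀ hr] at this
        exact this
      rw [div_le_iff₀ (by exact_mod_cast Nat.lt_of_lt_of_le Nat.zero_lt_one (hn1 i))]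
      nlinarith [hr.le, hR.le, (show (0:ℝ) < (n i : ℝ) from by exact_mod_cast hn1 i)]
    have hnormsq : ‖T v - ctr κ‖ ^ 2 ≤ D * (r * R) ^ 2 := by
      rw [← real_inner_self_eq_norm_sq, hdiff, hf.inner_sum]
      calc ∑ i, (starRingEnd ℝ) (c i - (-(s i * R) + (2 * ((κ i : ℕ) : ℝ) + 1) * (s i * R / n i)))
              * (c i - (-(s i * R) + (2 * ((κ i : ℕ) : ℝ) + 1) * (s i * R / n i)))
          ≤ ∑ _i : Fin D, (r * R) ^ 2 := by
            apply Finset.sum_le_sum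
            intro i _
            have := hbound i
            rw [starRingEnd_apply, star_trivial]
            calc (c i - (-(s i * R) + (2 * ((κ i : ℕ) : ℝ) + 1) * (s i * R / n i)))
                  * (c i - (-(s i * R) + (2 * ((κ i : ℕ) : ℝ) + 1) * (s i * R / n i)))
                = |c i - (-(s i * R) + (2 * ((κ i : ℕ) : ℝ) + 1) * (s i * R / n i))| ^ 2 := by
                  rw [sq_abs]; ring
              _ ≤ (r * R) ^ 2 := by
                  apply pow_le_pow_left₀ (abs_nonneg _) this
        _ = D * (r * R) ^ 2 := by
            rw [Finset.sum_const, Finset.card_univ, Fintype.card_fin, nsmul_eq_mul]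
    have : ‖T v - ctr κ‖ ≤ ρ := by
      have h0 : ‖T v - ctr κ‖ = Real.sqrt (‖T v - ctr κ‖ ^ 2) :=
        (Real.sqrt_sq (norm_nonneg _)).symm
      rw [h0, hρdef]
      calc Real.sqrt (‖T v - ctr κ‖ ^ 2) ≤ Real.sqrt (D * (r * R) ^ 2) :=
            Real.sqrt_le_sqrt hnormsq
        _ = Real.sqrt D * (r * R) := by
            rw [Real.sqrt_mul (by positivity) _, Real.sqrt_sq (by positivity)]
        _ = Real.sqrt D * r * R := by ring
    exact this
  · -- counting estimate
    have hcard : (Fintype.card (∀ i : Fin D, Fin (n i)) : ℝ) = ∏ i, (n i : ℝ) := by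
      rw [Fintype.card_pi]
      push_cast
      apply Finset.prod_congr rfl
      intro i _
      rw [Fintype.card_fin]
    set sN : ℕ → ℝ := fun k => if h : k < D then s ⟨k, h⟩ else 1 with hsN
    set nN : ℕ → ℝ := fun k => if h : k < D then (n ⟨k, h⟩ : ℝ) else 1 with hnN
    have hexp := phi_exp_nonneg hα D
    have key : (∏ i, (n i : ℝ)) * r ^ α ≤ 2 ^ D * Phi D T α := by
      have hprodn : ∏ i, (n i : ℝ) = ∏ k ∈ Finset.range D, nN k := by
        rw [← Fin.prod_univ_eq_prod_range nN D]
        apply Finset.prod_congr rfl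
        intro i _
        rw [hnN]
        simp only [i.isLt, dif_pos, Fin.eta]
      have hsplit : ∏ k ∈ Finset.range D, nN k
          = (∏ k ∈ Finset.range (m - 1), nN k) * ∏ k ∈ Finset.Ico (m - 1) D, nN k :=
        (Finset.prod_range_mul_prod_Ico nN (by omega)).symm
      have hIco : ∏ k ∈ Finset.Ico (m - 1) D, nN k = 1 := by
        apply Finset.prod_eq_one
        intro k hk
        obtain ⟨hk1, hk2⟩ := Finset.mem_Ico.mp hk
        rw [hnN]
        simp only [hk2, dif_pos]
        have hsk : s ⟨k, hk2⟩ ≤ r := by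
          apply hanti
          show (idx : ℕ) ≤ k
          exact hk1
        have : n ⟨k, hk2⟩ = 1 := by
          apply le_antisymm _ (hn1 _)
          apply Nat.ceil_le.mpr
          rw [Nat.cast_one, div_le_one hr]
          exact hsk
        rw [this, Nat.cast_one]
      have hrange : ∏ k ∈ Finset.range (m - 1), nN k
          ≤ ∏ k ∈ Finset.range (m - 1), 2 * (sN k / r) := by
        apply Finset.prod_le_prod
        · intro k _
          rw [hnN]
          by_cases hkD : k < D
          · simp only [hkD, dif_pos]
            positivity
          · simp only [hkD, dif_neg, not_false_iff]
            norm_num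
        · intro k hk
          have hkm : k < m - 1 := Finset.mem_range.mp hk
          have hkD : k < D := by omega
          rw [hnN, hsN]
          simp only [hkD, dif_pos]
          have hge : r ≤ s ⟨k, hkD⟩ := by
            apply hanti
            show (⟨k, hkD⟩ : Fin D) ≤ idx
            show k ≤ (idx : ℕ)
            simp only [hidxdef]
            omega
          have hge1 : 1 ≤ s ⟨k, hkD⟩ / r := (one_le_div hr).mpr hge
          calc ((n ⟨k, hkD⟩ : ℕ) : ℝ) = (⌈s ⟨k, hkD⟩ / r⌉₊ : ℝ) := by rw [hndef]
            _ ≤ s ⟨k, hkD⟩ / r + 1 := (Nat.ceil_lt_add_one (by positivity)).le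
            _ ≤ 2 * (s ⟨k, hkD⟩ / r) := by linarith
      have h2prod : ∏ k ∈ Finset.range (m - 1), 2 * (sN k / r)
          = 2 ^ (m - 1) * ((∏ k ∈ Finset.range (m - 1), sN k) / r ^ (m - 1)) := by
        rw [Finset.prod_mul_distrib, Finset.prod_const, Finset.card_range,
          Finset.prod_div_distrib, Finset.prod_const, Finset.card_range]
      have hrsplit : r ^ α = r ^ (m - 1) * r ^ (α - ((m - 1 : ℕ) : ℝ)) := by
        rw [← Real.rpow_natCast r (m - 1), ← Real.rpow_add hr]
        congr 1
        ring
      have hsN_nonneg : ∀ k, 0 ≤ sN k := by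
        intro k
        rw [hsN]
        by_cases hkD : k < D
        · simp only [hkD, dif_pos]
          exact (hspos _).le
        · simp only [hkD, dif_neg, not_false_iff]
          norm_num
      have hprod_le : ∏ k ∈ Finset.range (m - 1), sN k
          ≤ ∏ k ∈ Finset.range (m - 1), singVal T (k + 1) := by
        apply Finset.prod_le_prod (fun k _ => hsN_nonneg k)
        intro k hk
        have hkm : k < m - 1 := Finset.mem_range.mp hk
        have hkD : k < D := by omega
        rw [hsN]
        simp only [hkD, dif_pos]
        exact hsing ⟨k, hkD⟩
      have hr_le : r ^ (α - ((m - 1 : ℕ) : ℝ)) ≤ singVal T m ^ (α - ((m - 1 : ℕ) : ℝ)) := by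
        apply Real.rpow_le_rpow hr.le _ hexp
        have : (idx : ℕ) + 1 = m := by
          simp only [hidxdef]
          omega
        calc r ≤ singVal T ((idx : ℕ) + 1) := hsing idx
          _ = singVal T m := by rw [this]
      calc (∏ i, (n i : ℝ)) * r ^ α
          ≤ (2 ^ (m - 1) * ((∏ k ∈ Finset.range (m - 1), sN k) / r ^ (m - 1))) * r ^ α := by
            apply mul_le_mul_of_nonneg_right _ (Real.rpow_nonneg hr.le α)
            rw [hprodn, hsplit, hIco, mul_one, ← h2prod]
            exact hrange
        _ = 2 ^ (m - 1) * (∏ k ∈ Finset.range (m - 1), sN k) * r ^ (α - ((m - 1 : ℕ) : ℝ)) := by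
            rw [hrsplit]
            have hrm : (r : ℝ) ^ (m - 1) ≠ 0 := pow_ne_zero _ hr.ne'
            field_simp
        _ ≤ 2 ^ D * (∏ k ∈ Finset.range (m - 1), singVal T (k + 1))
              * singVal T m ^ (α - ((m - 1 : ℕ) : ℝ)) := by
            apply mul_le_mul ?h1 hr_le (Real.rpow_nonneg hr.le _) ?hb
            case hb =>
              exact mul_nonneg (by positivity)
                (Finset.prod_nonneg fun k _ => singVal_nonneg T _)
            case h1 =>
              apply mul_le_mul (pow_le_pow_right₀ one_le_two (by omega)) hprod_le
                (Finset.prod_nonneg fun k _ => hsN_nonneg k) (by positivity)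
        _ = 2 ^ D * Phi D T α := by
            rw [Phi, ← hm]
            ring
    -- put the pieces together
    have h2ρ : (2 * ρ) ^ α = (2 * Real.sqrt D * R) ^ α * r ^ α := by
      rw [← Real.mul_rpow (by positivity) hr.le]
      congr 1
      rw [hρdef]
      ring
    rw [hcard, h2ρ]
    calc (∏ i, (n i : ℝ)) * ((2 * Real.sqrt D * R) ^ α * r ^ α)
        = (2 * Real.sqrt D * R) ^ α * ((∏ i, (n i : ℝ)) * r ^ α) := by ring
      _ ≤ (2 * Real.sqrt D * R) ^ α * (2 ^ D * Phi D T α) := by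
          apply mul_le_mul_of_nonneg_left key (Real.rpow_nonneg (by positivity) α)
      _ = 2 ^ D * (2 * Real.sqrt D * R) ^ α * Phi D T α := by ring

end PhiCover
/-! ### Properties of the natural measure -/

section NatMeasure

variable {Λ : Type*} {D : ℕ} {Mlam : Λ → ℕ} {ω : List ℕ → Λ} {α : ℝ} {M : ℕ}
variable {T : Λ → ℕ → EuclideanSpace ℝ (Fin D) →L[ℝ] EuclideanSpace ℝ (Fin D)}

lemma norm_prodT_pos (hD : 0 < D)
    (hTns : ∀ l q, q < Mlam l → Function.Injective (T l q))
    {w : List ℕ} (hw : IsNode Mlam ω w) : 0 < ‖prodT T ω w‖ := by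
  rw [norm_pos_iff]
  intro h0
  have hinj := prodT_injective hTns w ω hw
  set v : EuclideanSpace ℝ (Fin D) := EuclideanSpace.single ⟨0, hD⟩ 1 with hv
  have h1 : prodT T ω w v = prodT T ω w 0 := by rw [h0]; rfl
  have h2 : v = 0 := hinj h1
  have h3 : v ⟨0, hD⟩ = 1 := by rw [hv, EuclideanSpace.single_apply, if_pos rfl]
  rw [h2] at h3
  exact one_ne_zero h3.symm

lemma natStage_mono (T : Λ → ℕ → EuclideanSpace ℝ (Fin D) →L[ℝ] EuclideanSpace ℝ (Fin D))
    (ω : List ℕ → Λ) (α : ℝ) : Monotone (natStage D Mlam T ω α) := by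
  intro j j' hjj'
  refine le_iInf fun J => le_iInf fun h1 => le_iInf fun h2 => ?_
  refine iInf_le_of_le J ?_
  refine iInf_le_of_le (fun w hw => ⟨(h1 w hw).1, le_trans hjj' (h1 w hw).2⟩) ?_
  exact iInf_le _ h2

lemma pathSet_subset_level (j : ℕ) :
    pathSet Mlam ω ⊆ ⋃ w ∈ {w : List ℕ | w.length = j ∧ IsNode Mlam ω w}, cylinder w := by
  intro i hi
  apply Set.mem_iUnion₂.mpr
  refine ⟨word i j, ⟨word_length i j, isNode_word hi j⟩, ?_⟩
  show word i (word i j).length = word i j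
  rw [word_length]

lemma level_set_finite (hM1 : ∀ l, 1 ≤ Mlam l) (hMsup : ∀ l, Mlam l ≤ M) (j : ℕ) :
    ∃ φ : {w : List ℕ | w.length = j ∧ IsNode Mlam ω w} → (Fin j → Fin M),
      Function.Injective φ := by
  have hM : 0 < M := lt_of_lt_of_le (hM1 (ω [])) (hMsup (ω []))
  refine ⟨fun w t => ⟨w.1.getD t 0, ?_⟩, ?_⟩
  · obtain ⟨hlen, hnode⟩ := w.2
    have ht : (t : ℕ) < w.1.length := by rw [hlen]; exact t.isLt
    rw [List.getD_eq_getElem w.1 0 ht]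
    calc w.1[(t : ℕ)] < Mlam (ω (w.1.take t)) := by
          have := hnode ⟨t, ht⟩
          simpa [List.get_eq_getElem] using this
      _ ≤ M := hMsup _
  · intro w w' hww'
    apply Subtype.ext
    apply List.ext_getElem (by rw [w.2.1, w'.2.1])
    intro k h1 h2
    have hk : k < j := by rw [← w.2.1]; exact h1
    have := congrFun hww' ⟨k, hk⟩
    rw [Fin.mk.injEq] at this
    rwa [List.getD_eq_getElem w.1 0 h1, List.getD_eq_getElem w'.1 0 h2] at this

lemma natStage_le_pow (hD : 0 < D) (hM1 : ∀ l, 1 ≤ Mlam l) (hMsup : ∀ l, Mlam l ≤ M)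
    (hTns : ∀ l q, q < Mlam l → Function.Injective (T l q))
    {σ : ℝ} (hσ0 : 0 ≤ σ) (hTnorm : ∀ l q, q < Mlam l → ‖T l q‖ ≤ σ)
    (hα : 0 ≤ α) (j : ℕ) :
    natStage D Mlam T ω α j ≤ (M : ℝ≥0∞) ^ j * ENNReal.ofReal ((σ ^ j) ^ α) := by
  classical
  set J₀ := {w : List ℕ | w.length = j ∧ IsNode Mlam ω w} with hJ₀
  have hstep : natStage D Mlam T ω α j ≤
      ∑' w : J₀, ENNReal.ofReal (Phi D (prodT T ω w.1) α) := by
    refine iInf_le_of_le J₀ ?_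
    refine iInf_le_of_le (fun w hw => ⟨hw.2, le_of_eq hw.1.symm⟩) ?_
    exact iInf_le _ (pathSet_subset_level j)
  have hterm : ∀ w : J₀, ENNReal.ofReal (Phi D (prodT T ω w.1) α)
      ≤ ENNReal.ofReal ((σ ^ j) ^ α) := by
    intro w
    apply ENNReal.ofReal_le_ofReal
    have hnode := w.2.2
    have hpos := norm_prodT_pos hD hTns hnode
    calc Phi D (prodT T ω w.1) α ≤ ‖prodT T ω w.1‖ ^ α := Phi_le_rpow_norm hα _ hpos
      _ ≤ (σ ^ j) ^ α := by
          apply Real.rpow_le_rpow (norm_nonneg _) _ hα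
          have := norm_prodT_le hσ0 hTnorm w.1 ω hnode
          rwa [w.2.1] at this
  obtain ⟨φ, hφ⟩ := level_set_finite (ω := ω) hM1 hMsup j
  have hfin : Finite ↥J₀ := Finite.of_injective φ hφ
  haveI : Fintype ↥J₀ := Fintype.ofFinite ↥J₀
  have hcard : Fintype.card ↥J₀ ≤ M ^ j := by
    calc Fintype.card ↥J₀ ≤ Fintype.card (Fin j → Fin M) :=
          Fintype.card_le_of_injective φ hφ
      _ = M ^ j := by rw [Fintype.card_fun, Fintype.card_fin, Fintype.card_fin]
  calc natStage D Mlam T ω α j ≤ ∑' w : J₀, ENNReal.ofReal (Phi D (prodT T ω w.1) α) := hstep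
    _ = ∑ w : J₀, ENNReal.ofReal (Phi D (prodT T ω w.1) α) := tsum_fintype _
    _ ≤ Fintype.card ↥J₀ • ENNReal.ofReal ((σ ^ j) ^ α) := by
        apply Finset.sum_le_card_nsmul
        intro w _
        exact hterm w
    _ = (Fintype.card ↥J₀ : ℝ≥0∞) * ENNReal.ofReal ((σ ^ j) ^ α) := nsmul_eq_mul _ _
    _ ≤ (M : ℝ≥0∞) ^ j * ENNReal.ofReal ((σ ^ j) ^ α) := by
        apply mul_le_mul_left
        calc (Fintype.card ↥J₀ : ℝ≥0∞) ≤ ((M ^ j : ℕ) : ℝ≥0∞) := by exact_mod_cast hcard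
          _ = (M : ℝ≥0∞) ^ j := by push_cast; rfl

lemma exists_natMeasure_zero (hD : 0 < D) (hM1 : ∀ l, 1 ≤ Mlam l) (hMsup : ∀ l, Mlam l ≤ M)
    (hTns : ∀ l q, q < Mlam l → Function.Injective (T l q))
    {σ : ℝ} (hσ0 : 0 < σ) (hσ1 : σ < 1) (hTnorm : ∀ l q, q < Mlam l → ‖T l q‖ ≤ σ) :
    ∃ α : ℝ, 0 ≤ α ∧ natMeasure D Mlam T ω α = 0 := by
  -- choose a natural exponent with M * σ ^ nα ≤ 1/2
  have htend : Filter.Tendsto (fun n : ℕ => (M : ℝ) * σ ^ n) Filter.atTop (nhds 0) := by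
    have := tendsto_pow_atTop_nhds_zero_of_lt_one hσ0.le hσ1
    simpa using this.const_mul (M : ℝ)
  have hev : ∀ᶠ n : ℕ in Filter.atTop, (M : ℝ) * σ ^ n < 1 / 2 := by
    apply htend.eventually_lt_const
    norm_num
  obtain ⟨nα, hnα⟩ := hev.exists
  refine ⟨(nα : ℝ), Nat.cast_nonneg _, ?_⟩
  have hα : (0 : ℝ) ≤ (nα : ℝ) := Nat.cast_nonneg _
  have hbound : ∀ j : ℕ, natStage D Mlam T ω (nα : ℝ) j ≤ ENNReal.ofReal ((1 / 2) ^ j) := by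
    intro j
    calc natStage D Mlam T ω (nα : ℝ) j
        ≤ (M : ℝ≥0∞) ^ j * ENNReal.ofReal ((σ ^ j) ^ (nα : ℝ)) :=
          natStage_le_pow hD hM1 hMsup hTns hσ0.le hTnorm hα j
      _ = ENNReal.ofReal ((M : ℝ) ^ j * (σ ^ j) ^ (nα : ℝ)) := by
          rw [ENNReal.ofReal_mul (by positivity)]
          congr 1
          rw [ENNReal.ofReal_pow (Nat.cast_nonneg M), ENNReal.ofReal_natCast]
      _ ≤ ENNReal.ofReal ((1 / 2) ^ j) := by
          apply ENNReal.ofReal_le_ofReal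
          have h1 : (σ ^ j) ^ (nα : ℝ) = (σ ^ nα) ^ j := by
            rw [Real.rpow_natCast, ← pow_mul, ← pow_mul, Nat.mul_comm]
          rw [h1, ← mul_pow]
          apply pow_le_pow_left₀ (by positivity)
          nlinarith [pow_nonneg hσ0.le nα]
  -- conclude each stage is zero
  have hzero : ∀ j, natStage D Mlam T ω (nα : ℝ) j = 0 := by
    intro j
    by_contra hne
    have hpos : 0 < natStage D Mlam T ω (nα : ℝ) j := pos_iff_ne_zero.mpr hne
    have htend2 : Filter.Tendsto (fun j' : ℕ => ENNReal.ofReal ((1 / 2) ^ j'))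
        Filter.atTop (nhds 0) := by
      rw [← ENNReal.ofReal_zero]
      apply ENNReal.tendsto_ofReal
      exact tendsto_pow_atTop_nhds_zero_of_lt_one (by norm_num) (by norm_num)
    have hev2 : ∀ᶠ j' : ℕ in Filter.atTop,
        ENNReal.ofReal ((1 / 2) ^ j') < natStage D Mlam T ω (nα : ℝ) j :=
      htend2.eventually_lt_const hpos
    obtain ⟨j', hj', hj'2⟩ := (hev2.and (Filter.eventually_ge_atTop j)).exists
    have : natStage D Mlam T ω (nα : ℝ) j ≤ ENNReal.ofReal ((1 / 2) ^ j') :=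
      le_trans (natStage_mono T ω _ hj'2) (hbound j')
    exact absurd this (not_le.mpr hj')
  rw [natMeasure]
  simp [hzero]

end NatMeasure
/-! ### The main estimate -/

section Main

variable {Λ : Type*}

lemma norm_trOf_le {A : Type*} [Fintype A] {D : ℕ} (cls : Λ → ℕ → A)
    (a : EuclideanSpace ℝ (A × Fin D)) (l : Λ) (q : ℕ) :
    ‖trOf cls a l q‖ ≤ ‖a‖ := by
  rw [EuclideanSpace.norm_eq, EuclideanSpace.norm_eq]
  apply Real.sqrt_le_sqrt
  calc ∑ d : Fin D, ‖trOf cls a l q d‖ ^ 2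
      = ∑ d : Fin D, ‖a (cls l q, d)‖ ^ 2 := rfl
    _ ≤ ∑ p : A × Fin D, ‖a p‖ ^ 2 := by
        rw [Fintype.sum_prod_type]
        exact Finset.single_le_sum (f := fun c => ∑ d : Fin D, ‖a (c, d)‖ ^ 2)
          (fun c _ => Finset.sum_nonneg fun d _ => sq_nonneg _) (Finset.mem_univ (cls l q))

lemma ediam_closedBall_le {X : Type*} [PseudoMetricSpace X] (x : X) (ρ : ℝ) :
    EMetric.diam (Metric.closedBall x ρ) ≤ ENNReal.ofReal (2 * ρ) := by
  apply EMetric.diam_le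
  intro p hp q hq
  rw [edist_dist]
  apply ENNReal.ofReal_le_ofReal
  rw [Metric.mem_closedBall] at hp hq
  calc dist p q ≤ dist p x + dist q x := dist_triangle_right p q x
    _ ≤ ρ + ρ := add_le_add hp hq
    _ = 2 * ρ := by ring

lemma hausdorffMeasure_attractor_zero
    {A : Type*} [Fintype A] {D : ℕ} (hD : 1 ≤ D)
    {Mlam : Λ → ℕ} (hM1 : ∀ l, 1 ≤ Mlam l)
    (T : Λ → ℕ → EuclideanSpace ℝ (Fin D) →L[ℝ] EuclideanSpace ℝ (Fin D))
    (hTns : ∀ l i, i < Mlam l → Function.Injective (T l i))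
    {σ : ℝ} (hσ0 : 0 < σ) (hσ1 : σ < 1)
    (hTnorm : ∀ l i, i < Mlam l → ‖T l i‖ ≤ σ)
    (cls : Λ → ℕ → A) (ω : List ℕ → Λ) (a : EuclideanSpace ℝ (A × Fin D))
    {α : ℝ} (hα : 0 ≤ α) (h0 : natMeasure D Mlam T ω α = 0) :
    μH[α] (attractor Mlam T (trOf cls a) ω) = 0 := by
  classical
  set tr := trOf cls a with htrdef
  have htr : ∀ l q, ‖tr l q‖ ≤ ‖a‖ := fun l q => norm_trOf_le cls a l q
  set R : ℝ := max ((1 - σ)⁻¹ * ‖a‖) 1 with hRdef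
  have hRpos : 0 < R := lt_of_lt_of_le one_pos (le_max_right _ _)
  have hZb : ∀ (ω' : List ℕ → Λ) (i : ℕ → ℕ), IsPath Mlam ω' i → ‖Z T tr ω' i‖ ≤ R :=
    fun ω' i hi => le_trans (norm_Z_le hσ0.le hσ1 hTnorm htr hi) (le_max_left _ _)
  set C := ENNReal.ofReal (2 ^ D * (2 * Real.sqrt D * R) ^ α) with hCdef
  have hCne : C ≠ ⊤ := ENNReal.ofReal_ne_top
  -- the main covering estimate
  have main : ∀ δ : ℝ≥0∞, 0 < δ → μH[α] (attractor Mlam T tr ω) ≤ C * δ := by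
    intro δ hδ
    have hstage : ∀ n : ℕ, natStage D Mlam T ω α n = 0 := by
      intro n
      apply le_antisymm _ zero_le
      rw [← h0]
      exact le_iSup (natStage D Mlam T ω α) n
    have hex : ∀ n : ℕ, ∃ J : Set (List ℕ),
        (∀ w ∈ J, IsNode Mlam ω w ∧ n ≤ w.length) ∧
        (pathSet Mlam ω ⊆ ⋃ w ∈ J, cylinder w) ∧
        (∑' w : J, ENNReal.ofReal (Phi D (prodT T ω w.1) α)) < δ := by
      intro n
      have h1 : natStage D Mlam T ω α n < δ := by rw [hstage n]; exact hδ
      rw [natStage] at h1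
      simp only [iInf_lt_iff] at h1
      obtain ⟨J, h2, h3, h4⟩ := h1
      exact ⟨J, h2, h3, h4⟩
    choose J hJnode hJcover hJsum using hex
    have hcov : ∀ (n : ℕ) (w : J n), ∃ (ι : Type) (_ : Fintype ι)
        (ctr : ι → EuclideanSpace ℝ (Fin D)) (ρ : ℝ),
        0 < ρ ∧ ρ ≤ Real.sqrt D * ‖prodT T ω w.1‖ * R ∧
        (prodT T ω w.1 '' Metric.closedBall 0 R ⊆ ⋃ κ, Metric.closedBall (ctr κ) ρ) ∧
        (Fintype.card ι : ℝ) * (2 * ρ) ^ α ≤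
          2 ^ D * (2 * Real.sqrt D * R) ^ α * Phi D (prodT T ω w.1) α :=
      fun n w => cover_image_closedBall hD _
        (prodT_injective hTns w.1 ω (hJnode n w.1 w.2).1) hα hRpos
    choose ι fint ctr ρ hρpos hρle hρcov hρcnt using hcov
    set t : ∀ n : ℕ, (Σ w : J n, ι n w) → Set (EuclideanSpace ℝ (Fin D)) :=
      fun n p => Metric.closedBall (cVec T tr ω p.1.1 + ctr n p.1 p.2) (ρ n p.1) with htdef
    haveI hcnta : ∀ n, Countable (Σ w : J n, ι n w) := by
      intro n
      haveI : ∀ w : J n, Fintype (ι n w) := fint n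
      infer_instance
    set rr : ℕ → ℝ≥0∞ := fun n => ENNReal.ofReal (2 * Real.sqrt D * R * σ ^ n) with hrrdef
    have hrr0 : Filter.Tendsto rr Filter.atTop (nhds 0) := by
      rw [← ENNReal.ofReal_zero]
      apply ENNReal.tendsto_ofReal
      have := tendsto_pow_atTop_nhds_zero_of_lt_one hσ0.le hσ1
      simpa using this.const_mul (2 * Real.sqrt D * R)
    have hρn : ∀ (n : ℕ) (w : J n), ρ n w ≤ Real.sqrt D * σ ^ n * R := by
      intro n w
      refine le_trans (hρle n w) ?_
      have h1 : ‖prodT T ω w.1‖ ≤ σ ^ n := by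
        calc ‖prodT T ω w.1‖ ≤ σ ^ w.1.length :=
              norm_prodT_le hσ0.le hTnorm w.1 ω (hJnode n w.1 w.2).1
          _ ≤ σ ^ n := pow_le_pow_of_le_one hσ0.le hσ1.le (hJnode n w.1 w.2).2
      have hsq : 0 ≤ Real.sqrt D := Real.sqrt_nonneg _
      apply mul_le_mul_of_nonneg_right _ hRpos.le
      exact mul_le_mul_of_nonneg_left h1 hsq
    have hdiam : ∀ (n : ℕ) (p : Σ w : J n, ι n w), EMetric.diam (t n p) ≤ rr n := by
      intro n p
      refine le_trans (ediam_closedBall_le _ _) (ENNReal.ofReal_le_ofReal ?_)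
      have := hρn n p.1
      nlinarith [Real.sqrt_nonneg (D : ℝ), hRpos, pow_nonneg hσ0.le n, (hρpos n p.1).le]
    have hsub : ∀ n, attractor Mlam T tr ω ⊆ ⋃ p, t n p := by
      intro n x hx
      obtain ⟨i, hi, rfl⟩ := hx
      have hiw := hJcover n hi
      rw [Set.mem_iUnion₂] at hiw
      obtain ⟨w, hwJ, hwc⟩ := hiw
      have hword : word i w.length = w := hwc
      have hZ := Z_eq_on_cylinder hσ0.le hσ1 hTnorm htr hi hword
      have hz' : Z T tr (fun u => ω (w ++ u)) (fun k => i (w.length + k))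
          ∈ Metric.closedBall (0 : EuclideanSpace ℝ (Fin D)) R := by
        rw [Metric.mem_closedBall, dist_zero_right]
        exact hZb _ _ (isPath_shift hi hword)
      have hmem : prodT T ω w (Z T tr (fun u => ω (w ++ u)) (fun k => i (w.length + k)))
          ∈ prodT T ω w '' Metric.closedBall 0 R := ⟨_, hz', rfl⟩
      have h2 := hρcov n ⟨w, hwJ⟩ hmem
      rw [Set.mem_iUnion] at h2
      obtain ⟨κ, hκ⟩ := h2
      refine Set.mem_iUnion.mpr ⟨⟨⟨w, hwJ⟩, κ⟩, ?_⟩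
      show Z T tr ω i ∈ Metric.closedBall _ _
      rw [hZ, Metric.mem_closedBall]
      rw [Metric.mem_closedBall] at hκ
      calc dist (cVec T tr ω w + prodT T ω w (Z T tr (fun u => ω (w ++ u))
              (fun k => i (w.length + k))))
            (cVec T tr ω w + ctr n ⟨w, hwJ⟩ κ)
          = dist (prodT T ω w (Z T tr (fun u => ω (w ++ u)) (fun k => i (w.length + k))))
              (ctr n ⟨w, hwJ⟩ κ) := dist_add_left _ _ _
        _ ≤ ρ n ⟨w, hwJ⟩ := hκ
    have hsumb : ∀ n, ∑' p : (Σ w : J n, ι n w), EMetric.diam (t n p) ^ α ≤ C * δ := by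
      intro n
      letI : ∀ w : J n, Fintype (ι n w) := fint n
      calc ∑' p : (Σ w : J n, ι n w), EMetric.diam (t n p) ^ α
          = ∑' (w : J n) (κ : ι n w), EMetric.diam (t n ⟨w, κ⟩) ^ α :=
            ENNReal.tsum_sigma' _
        _ ≤ ∑' w : J n, C * ENNReal.ofReal (Phi D (prodT T ω w.1) α) := by
            apply ENNReal.tsum_le_tsum
            intro w
            calc ∑' κ : ι n w, EMetric.diam (t n ⟨w, κ⟩) ^ α
                ≤ ∑' _κ : ι n w, ENNReal.ofReal ((2 * ρ n w) ^ α) := by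
                  apply ENNReal.tsum_le_tsum
                  intro κ
                  calc EMetric.diam (t n ⟨w, κ⟩) ^ α
                      ≤ ENNReal.ofReal (2 * ρ n w) ^ α :=
                        ENNReal.rpow_le_rpow (ediam_closedBall_le _ _) hα
                    _ = ENNReal.ofReal ((2 * ρ n w) ^ α) :=
                        ENNReal.ofReal_rpow_of_nonneg (mul_nonneg zero_le_two (hρpos n w).le) hα
              _ = (Fintype.card (ι n w) : ℝ≥0∞) * ENNReal.ofReal ((2 * ρ n w) ^ α) := by
                  rw [tsum_fintype]
                  rw [Finset.sum_const, Finset.card_univ, nsmul_eq_mul]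
              _ ≤ C * ENNReal.ofReal (Phi D (prodT T ω w.1) α) := by
                  have hcn : (0:ℝ) ≤ 2 ^ D * (2 * Real.sqrt D * R) ^ α :=
                    mul_nonneg (by positivity)
                      (Real.rpow_nonneg (mul_nonneg (by positivity) hRpos.le) α)
                  rw [← ENNReal.ofReal_natCast (Fintype.card (ι n w)),
                    ← ENNReal.ofReal_mul (Nat.cast_nonneg _), hCdef,
                    ← ENNReal.ofReal_mul hcn]
                  exact ENNReal.ofReal_le_ofReal (hρcnt n w)
        _ = C * ∑' w : J n, ENNReal.ofReal (Phi D (prodT T ω w.1) α) :=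
            ENNReal.tsum_mul_left
        _ ≤ C * δ := mul_le_mul_right (hJsum n).le _
    calc μH[α] (attractor Mlam T tr ω)
        ≤ Filter.liminf (fun n => ∑' p : (Σ w : J n, ι n w), EMetric.diam (t n p) ^ α)
            Filter.atTop :=
          Measure.hausdorffMeasure_le_liminf_tsum α _ rr hrr0 t
            (Filter.Eventually.of_forall hdiam) (Filter.Eventually.of_forall hsub)
      _ ≤ Filter.liminf (fun _n : ℕ => C * δ) Filter.atTop :=
          Filter.liminf_le_liminf (Filter.Eventually.of_forall hsumb)
      _ = C * δ := Filter.liminf_const _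
  -- conclude
  have hle : ∀ n : ℕ, μH[α] (attractor Mlam T tr ω) ≤ C * ENNReal.ofReal (1 / (n + 1)) := by
    intro n
    apply main
    apply ENNReal.ofReal_pos.mpr
    positivity
  have htend : Filter.Tendsto (fun n : ℕ => C * ENNReal.ofReal (1 / (n + 1 : ℝ)))
      Filter.atTop (nhds 0) := by
    have h1 : Filter.Tendsto (fun n : ℕ => ENNReal.ofReal (1 / (n + 1 : ℝ)))
        Filter.atTop (nhds 0) := by
      rw [← ENNReal.ofReal_zero]
      exact ENNReal.tendsto_ofReal tendsto_one_div_add_atTop_nhds_zero_nat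
    have := ENNReal.Tendsto.const_mul h1 (Or.inr hCne)
    simpa using this
  have := ge_of_tendsto' htend hle
  exact le_antisymm this zero_le

end Main
/-- inequality \eqref{upperbound}: for every code tree `ω` and every
translation parameter `a ∈ ℝ^{D·𝒜}`, `dim_H (A_a^ω) ≤ d^ω`. -/
theorem statement2
    {Λ A : Type*} [Fintype A] (D : ℕ) (hD : 1 ≤ D)
    (Mlam : Λ → ℕ) (hM1 : ∀ l, 1 ≤ Mlam l) (M : ℕ) (hMsup : ∀ l, Mlam l ≤ M)
    (T : Λ → ℕ → EuclideanSpace ℝ (Fin D) →L[ℝ] EuclideanSpace ℝ (Fin D))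
    (hTns : ∀ l i, i < Mlam l → Function.Injective (T l i))
    (σbar : ℝ) (hσbar : σbar < 1)
    (hTnorm : ∀ l i, i < Mlam l → ‖T l i‖ ≤ σbar)
    (cls : Λ → ℕ → A)
    (hcls : ∀ l i j, i < Mlam l → j < Mlam l → cls l i = cls l j → i = j)
    (ω : List ℕ → Λ) (a : EuclideanSpace ℝ (A × Fin D)) :
    dimH (attractor Mlam T (trOf cls a) ω)
      ≤ ENNReal.ofReal (affinityDim D Mlam T ω) := by
  classical
  set σ : ℝ := max σbar (1 / 2) with hσdef
  have hσ0 : 0 < σ := lt_of_lt_of_le (by norm_num) (le_max_right _ _)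
  have hσ1 : σ < 1 := max_lt hσbar (by norm_num)
  have hTnorm' : ∀ l i, i < Mlam l → ‖T l i‖ ≤ σ := fun l i h =>
    le_trans (hTnorm l i h) (le_max_left _ _)
  set 𝒮 := {α : ℝ | 0 ≤ α ∧ natMeasure D Mlam T ω α = 0} with h𝒮
  have hne : 𝒮.Nonempty := by
    obtain ⟨α, hα1, hα2⟩ :=
      exists_natMeasure_zero (ω := ω) hD hM1 hMsup hTns hσ0 hσ1 hTnorm'
    exact ⟨α, hα1, hα2⟩
  have hbdd : BddBelow 𝒮 := ⟨0, fun α hα => hα.1⟩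
  have hdim : ∀ α ∈ 𝒮, dimH (attractor Mlam T (trOf cls a) ω) ≤ ENNReal.ofReal α := by
    intro α hα
    have hz := hausdorffMeasure_attractor_zero hD hM1 T hTns hσ0 hσ1 hTnorm'
      cls ω a hα.1 hα.2
    have hz' : μH[((α.toNNReal : NNReal) : ℝ)] (attractor Mlam T (trOf cls a) ω) = 0 := by
      rwa [Real.coe_toNNReal α hα.1]
    have hd := dimH_le_of_hausdorffMeasure_ne_top (by rw [hz']; exact ENNReal.zero_ne_top)
    exact hd
  have happrox : ∀ n : ℕ, dimH (attractor Mlam T (trOf cls a) ω)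
      ≤ ENNReal.ofReal (sInf 𝒮 + 1 / (n + 1)) := by
    intro n
    have hlt : sInf 𝒮 < sInf 𝒮 + 1 / (n + 1 : ℝ) := lt_add_of_pos_right _ (by positivity)
    obtain ⟨α, hαS, hαlt⟩ := (csInf_lt_iff hbdd hne).mp hlt
    exact le_trans (hdim α hαS) (ENNReal.ofReal_le_ofReal hαlt.le)
  have htend : Filter.Tendsto (fun n : ℕ => ENNReal.ofReal (sInf 𝒮 + 1 / (n + 1)))
      Filter.atTop (nhds (ENNReal.ofReal (sInf 𝒮))) := by
    apply ENNReal.tendsto_ofReal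
    have h1 := tendsto_one_div_add_atTop_nhds_zero_nat (𝕜 := ℝ)
    have h2 := h1.const_add (sInf 𝒮)
    simpa using h2
  exact ge_of_tendsto' htend happrox

end CodeTreeFractal
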